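/- Let σ : T → [0,∞) be a Carleson measure with constant C and let p ∈ (1, ∞). Then there is a constant C' depending only on C and p such that Σ_{x ∈ T} |𝒫f(x)|^p σ(x) ≤ C' ‖f‖_{L^p(ν)}^p for every f ∈ L^p(∂T, ν). -/

import Mathlib

open MeasureTheory
open scoped ENNReal NNReal

/-- The punctured boundary `∂T` of the tree: maps `ω : ℤ → T` with `lev (ω j) = j`
and `par (ω j) = ω (j+1)`. -/
def PBoundary {T : Type*} (par : T → T) (lev : T → ℤ) : Type _ :=
  {ω : ℤ → T // (∀ j : ℤ, lev (ω j) = j) ∧ ∀ j : ℤ, par (ω j) = ω (j + 1)}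

/-- The boundary sector `∂T_x`. -/
def sector {T : Type*} (par : T → T) (lev : T → ℤ) (x : T) : Set (PBoundary par lev) :=
  {ω : PBoundary par lev | ω.1 (lev x) = x}

/-- The σ-algebra on `∂T` generated by the sectors. -/
instance {T : Type*} (par : T → T) (lev : T → ℤ) : MeasurableSpace (PBoundary par lev) :=
  MeasurableSpace.generateFrom (Set.range (sector par lev))

/-- The flow measure `m_ν x = ν (∂T_x)` (as a real number). -/
noncomputable def mnu {T : Type*} (par : T → T) (lev : T → ℤ)
    (ν : Measure (PBoundary par lev)) (x : T) : ℝ :=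
  (ν (sector par lev x)).toReal

/-- The Poisson integral operator `𝒫 g (x) = m_ν(x)⁻¹ ∫_{∂T_x} g dν`. -/
noncomputable def poisson {T : Type*} (par : T → T) (lev : T → ℤ)
    (ν : Measure (PBoundary par lev)) (g : PBoundary par lev → ℝ) (x : T) : ℝ :=
  (mnu par lev ν x)⁻¹ * ∫ ω in sector par lev x, g ω ∂ν

/-- The sector `T_x = {y ∈ T : y lies below x}`. -/
def tsector {T : Type*} (par : T → T) (x : T) : Set T :=
  {y : T | ∃ n : ℕ, par^[n] y = x}

universe u

section Aux
variable {T : Type u} {par : T → T} {lev : T → ℤ}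

lemma lev_iter (hlev : ∀ x : T, lev (par x) = lev x + 1) (x : T) :
    ∀ n : ℕ, lev (par^[n] x) = lev x + n
  | 0 => by simp
  | (n+1) => by
      rw [Function.iterate_succ_apply', hlev, lev_iter hlev x n]; push_cast; ring

lemma pb_iter (ω : PBoundary par lev) (j : ℤ) :
    ∀ n : ℕ, par^[n] (ω.1 j) = ω.1 (j + n)
  | 0 => by simp
  | (n+1) => by
      rw [Function.iterate_succ_apply', pb_iter ω j n, ω.2.2]
      congr 1; push_cast; ring

lemma measurableSet_sector (par : T → T) (lev : T → ℤ) (x : T) :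
    MeasurableSet (sector par lev x) :=
  MeasurableSpace.measurableSet_generateFrom ⟨x, rfl⟩

lemma tsector_self (x : T) : x ∈ tsector par x := ⟨0, rfl⟩

lemma tsector_trans {x y z : T} (hxy : x ∈ tsector par y) (hyz : y ∈ tsector par z) :
    x ∈ tsector par z := by
  obtain ⟨n, hn⟩ := hxy; obtain ⟨m, hm⟩ := hyz
  exact ⟨m + n, by rw [Function.iterate_add_apply, hn, hm]⟩

lemma sector_subset (hlev : ∀ x : T, lev (par x) = lev x + 1) {x y : T}
    (h : x ∈ tsector par y) : sector par lev x ⊆ sector par lev y := by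
  obtain ⟨n, hn⟩ := h
  intro ω hω
  have hy : lev y = lev x + n := by rw [← hn, lev_iter hlev]
  show ω.1 (lev y) = y
  rw [hy, ← pb_iter ω (lev x) n, hω, hn]

lemma sector_inter {x y : T} (h : (sector par lev x ∩ sector par lev y).Nonempty) :
    x ∈ tsector par y ∨ y ∈ tsector par x := by
  obtain ⟨ω, hx, hy⟩ := h
  have hlx : lev x = lev (ω.1 (lev x)) := by rw [hx]
  have hly : lev y = lev (ω.1 (lev y)) := by rw [hy]
  rcases le_total (lev x) (lev y) with hle | hle
  · left
    obtain ⟨n, hn⟩ : ∃ n : ℕ, lev y = lev x + n :=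
      ⟨(lev y - lev x).toNat, by omega⟩
    exact ⟨n, by rw [← hx, pb_iter ω (lev x) n, ← hn, hy]⟩
  · right
    obtain ⟨n, hn⟩ : ∃ n : ℕ, lev x = lev y + n :=
      ⟨(lev x - lev y).toNat, by omega⟩
    exact ⟨n, by rw [← hy, pb_iter ω (lev y) n, ← hn, hx]⟩

lemma tsector_inter {x y : T} (h : (tsector par x ∩ tsector par y).Nonempty) :
    x ∈ tsector par y ∨ y ∈ tsector par x := by
  obtain ⟨z, ⟨n, hn⟩, ⟨m, hm⟩⟩ := h
  rcases le_total n m with hle | hle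
  · left
    exact ⟨m - n, by rw [← hn, ← Function.iterate_add_apply, Nat.sub_add_cancel hle, hm]⟩
  · right
    exact ⟨n - m, by rw [← hm, ← Function.iterate_add_apply, Nat.sub_add_cancel hle, hn]⟩

lemma tsector_antisymm (hlev : ∀ x : T, lev (par x) = lev x + 1) {x y : T}
    (hxy : x ∈ tsector par y) (hyx : y ∈ tsector par x) : x = y := by
  obtain ⟨n, hn⟩ := hxy; obtain ⟨m, hm⟩ := hyx
  have h1 : lev y = lev x + n := by rw [← hn, lev_iter hlev]
  have h2 : lev x = lev y + m := by rw [← hm, lev_iter hlev]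
  have : n = 0 := by omega
  subst this; rw [← hn]; rfl

lemma sector_disjoint (hlev : ∀ x : T, lev (par x) = lev x + 1) {x y : T}
    (h : Disjoint (tsector par x) (tsector par y)) :
    Disjoint (sector par lev x) (sector par lev y) := by
  rw [Set.disjoint_iff_inter_eq_empty]
  by_contra hne
  rcases sector_inter (Set.nonempty_iff_ne_empty.2 hne) with hc | hc
  · exact (Set.disjoint_left.1 h (tsector_self x) hc).elim
  · exact (Set.disjoint_left.1 h hc (tsector_self y)).elim

lemma exists_maximal_in (hlev : ∀ x : T, lev (par x) = lev x + 1)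
    (s : Finset T) {x : T} (hx : x ∈ s) :
    ∃ y ∈ s, x ∈ tsector par y ∧ ∀ z ∈ s, y ∈ tsector par z → y = z := by
  classical
  set t := s.filter (fun y => x ∈ tsector par y) with ht
  have hxt : x ∈ t := Finset.mem_filter.2 ⟨hx, tsector_self x⟩
  obtain ⟨y, hyt, hmax⟩ := t.exists_max_image lev ⟨x, hxt⟩
  obtain ⟨hys, hxy⟩ := Finset.mem_filter.1 hyt
  refine ⟨y, hys, hxy, ?_⟩
  intro z hz hyz
  obtain ⟨n, hn⟩ := hyz
  have hzt : z ∈ t := Finset.mem_filter.2 ⟨hz, tsector_trans hxy ⟨n, hn⟩⟩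
  have h1 : lev z ≤ lev y := hmax z hzt
  have h2 : lev z = lev y + n := by rw [← hn, lev_iter hlev]
  have : n = 0 := by omega
  subst this; rw [← hn]; rfl

end Aux

section Aux2
variable {T : Type u} {par : T → T} {lev : T → ℤ}

lemma maximal_disjoint {s : Finset T} {y₁ y₂ : T}
    (h1s : y₁ ∈ s) (h1m : ∀ z ∈ s, y₁ ∈ tsector par z → y₁ = z)
    (h2s : y₂ ∈ s) (h2m : ∀ z ∈ s, y₂ ∈ tsector par z → y₂ = z)
    (hne : y₁ ≠ y₂) : Disjoint (tsector par y₁) (tsector par y₂) := by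
  rw [Set.disjoint_iff_inter_eq_empty]
  by_contra hcon
  rcases tsector_inter (Set.nonempty_iff_ne_empty.2 hcon) with hc | hc
  · exact hne (h1m y₂ h2s hc)
  · exact hne ((h2m y₁ h1s hc).symm)

lemma finite_carleson (hlev : ∀ x : T, lev (par x) = lev x + 1)
    (ν : Measure (PBoundary par lev)) (σ : T → ℝ≥0) (C : ℝ≥0)
    (hcar : ∀ x : T, ∑' y : tsector par x, (σ y.1 : ℝ≥0∞) ≤ (C : ℝ≥0∞) * ν (sector par lev x))
    (s : Finset T) :
    ∑ x ∈ s, (σ x : ℝ≥0∞) ≤ (C : ℝ≥0∞) * ν (⋃ x ∈ s, sector par lev x) := by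
  classical
  set M := s.filter (fun y => ∀ z ∈ s, y ∈ tsector par z → y = z) with hM
  have hMdisj : ∀ y₁ ∈ M, ∀ y₂ ∈ M, y₁ ≠ y₂ → Disjoint (tsector par y₁) (tsector par y₂) := by
    intro y₁ h1 y₂ h2 hne
    obtain ⟨h1s, h1m⟩ := Finset.mem_filter.1 h1
    obtain ⟨h2s, h2m⟩ := Finset.mem_filter.1 h2
    exact maximal_disjoint h1s h1m h2s h2m hne
  have hassign : ∀ x ∈ s, ∃ y ∈ M, x ∈ tsector par y := by
    intro x hx
    obtain ⟨y, hys, hxy, hmax⟩ := exists_maximal_in hlev s hx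
    exact ⟨y, Finset.mem_filter.2 ⟨hys, hmax⟩, hxy⟩
  have hsub : s ⊆ M.biUnion (fun y => s.filter (fun x => x ∈ tsector par y)) := by
    intro x hx
    obtain ⟨y, hyM, hxy⟩ := hassign x hx
    exact Finset.mem_biUnion.2 ⟨y, hyM, Finset.mem_filter.2 ⟨hx, hxy⟩⟩
  have hpair : ∀ y₁ ∈ M, ∀ y₂ ∈ M, y₁ ≠ y₂ →
      Disjoint (s.filter (fun x => x ∈ tsector par y₁)) (s.filter (fun x => x ∈ tsector par y₂)) := by
    intro y₁ h1 y₂ h2 hne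
    rw [Finset.disjoint_left]
    intro a ha hb
    exact Set.disjoint_left.1 (hMdisj y₁ h1 y₂ h2 hne)
      (Finset.mem_filter.1 ha).2 (Finset.mem_filter.1 hb).2
  calc ∑ x ∈ s, (σ x : ℝ≥0∞)
      ≤ ∑ x ∈ M.biUnion (fun y => s.filter (fun x => x ∈ tsector par y)), (σ x : ℝ≥0∞) :=
        Finset.sum_le_sum_of_subset hsub
    _ = ∑ y ∈ M, ∑ x ∈ s.filter (fun x => x ∈ tsector par y), (σ x : ℝ≥0∞) :=
        Finset.sum_biUnion hpair
    _ ≤ ∑ y ∈ M, (C : ℝ≥0∞) * ν (sector par lev y) := by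
        refine Finset.sum_le_sum fun y _ => le_trans ?_ (hcar y)
        rw [tsum_subtype (tsector par y) (fun z => (σ z : ℝ≥0∞))]
        calc ∑ x ∈ s.filter (fun x => x ∈ tsector par y), (σ x : ℝ≥0∞)
            = ∑ x ∈ s.filter (fun x => x ∈ tsector par y),
                (tsector par y).indicator (fun z => (σ z : ℝ≥0∞)) x :=
              Finset.sum_congr rfl fun x hx =>
                (Set.indicator_of_mem (Finset.mem_filter.1 hx).2 (fun z => (σ z : ℝ≥0∞))).symm
          _ ≤ ∑' x : T, (tsector par y).indicator (fun z => (σ z : ℝ≥0∞)) x :=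
              ENNReal.sum_le_tsum _
    _ = (C : ℝ≥0∞) * ∑ y ∈ M, ν (sector par lev y) := by rw [Finset.mul_sum]
    _ = (C : ℝ≥0∞) * ν (⋃ y ∈ M, sector par lev y) := by
        rw [measure_biUnion_finset ?hd (fun b _ => measurableSet_sector par lev b)]
        case hd =>
          intro y₁ h1 y₂ h2 hne
          exact sector_disjoint hlev (hMdisj y₁ h1 y₂ h2 hne)
    _ ≤ (C : ℝ≥0∞) * ν (⋃ x ∈ s, sector par lev x) := by
        refine mul_le_mul_right (measure_mono ?_) _
        exact Set.biUnion_subset_biUnion_left (fun y hy => (Finset.mem_filter.1 hy).1)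

lemma finite_nu_le (hlev : ∀ x : T, lev (par x) = lev x + 1)
    (ν ρ : Measure (PBoundary par lev)) (s : Finset T)
    (h : ∀ x ∈ s, ν (sector par lev x) ≤ ρ (sector par lev x)) :
    ν (⋃ x ∈ s, sector par lev x) ≤ ρ (⋃ x ∈ s, sector par lev x) := by
  classical
  set M := s.filter (fun y => ∀ z ∈ s, y ∈ tsector par z → y = z) with hM
  have hMdisj : ∀ y₁ ∈ M, ∀ y₂ ∈ M, y₁ ≠ y₂ → Disjoint (tsector par y₁) (tsector par y₂) := by
    intro y₁ h1 y₂ h2 hne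
    obtain ⟨h1s, h1m⟩ := Finset.mem_filter.1 h1
    obtain ⟨h2s, h2m⟩ := Finset.mem_filter.1 h2
    exact maximal_disjoint h1s h1m h2s h2m hne
  have hUeq : (⋃ x ∈ s, sector par lev x) = ⋃ y ∈ M, sector par lev y := by
    apply subset_antisymm
    · intro ω hω
      obtain ⟨x, hx, hωx⟩ := Set.mem_iUnion₂.1 hω
      obtain ⟨y, hys, hxy, hmax⟩ := exists_maximal_in hlev s hx
      exact Set.mem_biUnion (Finset.mem_filter.2 ⟨hys, hmax⟩) (sector_subset hlev hxy hωx)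
    · exact Set.biUnion_subset_biUnion_left (fun y hy => (Finset.mem_filter.1 hy).1)
  rw [hUeq]
  calc ν (⋃ y ∈ M, sector par lev y) ≤ ∑ y ∈ M, ν (sector par lev y) :=
        measure_biUnion_finset_le M _
    _ ≤ ∑ y ∈ M, ρ (sector par lev y) :=
        Finset.sum_le_sum fun y hy => h y (Finset.mem_filter.1 hy).1
    _ = ρ (⋃ y ∈ M, sector par lev y) := by
        rw [measure_biUnion_finset ?hd (fun b _ => measurableSet_sector par lev b)]
        case hd =>
          intro y₁ h1 y₂ h2 hne
          exact sector_disjoint hlev (hMdisj y₁ h1 y₂ h2 hne)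

lemma fiber_iter_finite (hfin : ∀ x : T, {y : T | par y = x}.Finite) :
    ∀ (n : ℕ) (x : T), {y : T | par^[n] y = x}.Finite := by
  intro n
  induction n with
  | zero => intro x; simpa using Set.finite_singleton x
  | succ n ih =>
      intro x
      have hset : {y : T | par^[n+1] y = x}
          = ⋃ z ∈ {z : T | par^[n] z = x}, {y : T | par y = z} := by
        ext y
        simp only [Set.mem_setOf_eq, Set.mem_iUnion, exists_prop]
        constructor
        · intro hy
          exact ⟨par y, by rwa [Function.iterate_succ_apply] at hy, rfl⟩
        · rintro ⟨z, hz, rfl⟩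
          rwa [Function.iterate_succ_apply]
      rw [hset]
      exact (ih x).biUnion fun z _ => hfin z

lemma lc_core {r : ℝ} (hr : -1 < r) {t : ℝ} (ht : 0 ≤ t) :
    ∫⁻ l in Set.Ioo (0:ℝ) t, ENNReal.ofReal (l ^ r) = ENNReal.ofReal (t ^ (r+1) / (r+1)) := by
  have hint : IntegrableOn (fun x : ℝ => x ^ r) (Set.Ioo 0 t) := by
    have h := intervalIntegral.intervalIntegrable_rpow' (a := 0) (b := t) hr
    rw [intervalIntegrable_iff, Set.uIoc_of_le ht] at h
    exact h.mono_set Set.Ioo_subset_Ioc_self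
  have hnn : 0 ≤ᵐ[volume.restrict (Set.Ioo (0:ℝ) t)] fun x : ℝ => x ^ r := by
    filter_upwards [ae_restrict_mem measurableSet_Ioo] with x hx
    exact Real.rpow_nonneg hx.1.le r
  rw [← ofReal_integral_eq_lintegral_ofReal hint hnn]
  congr 1
  have heq : ∫ x in Set.Ioo (0:ℝ) t, x ^ r = ∫ x in (0:ℝ)..t, x ^ r := by
    rw [intervalIntegral.integral_of_le ht, integral_Ioc_eq_integral_Ioo]
  rw [heq, integral_rpow (Or.inl hr), Real.zero_rpow (by linarith), sub_zero]

end Aux2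

section Aux3

lemma lc1 {p : ℝ} (hp : 1 < p) {t : ℝ} (ht : 0 ≤ t) :
    ∫⁻ l in Set.Ioi (0:ℝ), (Set.Iio t).indicator (fun l => ENNReal.ofReal (p * l ^ (p-1))) l
      = ENNReal.ofReal (t ^ p) := by
  rw [lintegral_indicator measurableSet_Iio, Measure.restrict_restrict measurableSet_Iio]
  have h1 : Set.Iio t ∩ Set.Ioi 0 = Set.Ioo 0 t := by rw [Set.inter_comm, Set.Ioi_inter_Iio]
  rw [h1]
  have hof : ∀ l : ℝ, ENNReal.ofReal (p * l^(p-1)) = ENNReal.ofReal p * ENNReal.ofReal (l^(p-1)) :=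
    fun l => ENNReal.ofReal_mul (by linarith)
  simp_rw [hof]
  rw [lintegral_const_mul' _ _ ENNReal.ofReal_ne_top, lc_core (by linarith) ht,
    ← ENNReal.ofReal_mul (by linarith)]
  congr 1
  rw [show p - 1 + 1 = p by ring]
  field_simp

lemma lc2 {p : ℝ} (hp : 1 < p) {g : ℝ} (hg : 0 ≤ g) :
    ∫⁻ l in Set.Ioi (0:ℝ), ENNReal.ofReal (2*p*l^(p-2)) *
        (if ENNReal.ofReal (l/2) < ENNReal.ofReal g then ENNReal.ofReal g else 0)
      = ENNReal.ofReal ((2^p * p / (p-1)) * g ^ p) := by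
  classical
  rcases eq_or_lt_of_le hg with hg0 | hg0
  · rw [← hg0]
    have : ∀ l : ℝ, ENNReal.ofReal (2*p*l^(p-2)) *
        (if ENNReal.ofReal (l/2) < ENNReal.ofReal (0:ℝ) then ENNReal.ofReal (0:ℝ) else 0) = 0 := by
      intro l
      rw [if_neg, mul_zero]
      simp
    simp_rw [this]
    rw [lintegral_zero, Real.zero_rpow (by linarith : p ≠ 0), mul_zero, ENNReal.ofReal_zero]
  · have hcong : ∀ l : ℝ, l ∈ Set.Ioi (0:ℝ) →
        ENNReal.ofReal (2*p*l^(p-2)) *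
            (if ENNReal.ofReal (l/2) < ENNReal.ofReal g then ENNReal.ofReal g else 0)
          = (Set.Iio (2*g)).indicator
              (fun l => ENNReal.ofReal (2*p*l^(p-2)) * ENNReal.ofReal g) l := by
      intro l _
      by_cases hlt : l < 2*g
      · rw [Set.indicator_of_mem (Set.mem_Iio.2 hlt), if_pos]
        exact (ENNReal.ofReal_lt_ofReal_iff hg0).2 (by linarith)
      · rw [Set.indicator_of_notMem (by simpa using hlt), if_neg, mul_zero]
        intro hcon
        exact hlt (by linarith [(ENNReal.ofReal_lt_ofReal_iff hg0).1 hcon])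
    rw [setLIntegral_congr_fun measurableSet_Ioi hcong,
      lintegral_indicator measurableSet_Iio, Measure.restrict_restrict measurableSet_Iio]
    have h1 : Set.Iio (2*g) ∩ Set.Ioi 0 = Set.Ioo 0 (2*g) := by
      rw [Set.inter_comm, Set.Ioi_inter_Iio]
    rw [h1, lintegral_mul_const' _ _ ENNReal.ofReal_ne_top]
    have hof : ∀ l : ℝ, ENNReal.ofReal (2*p*l^(p-2))
        = ENNReal.ofReal (2*p) * ENNReal.ofReal (l^(p-2)) :=
      fun l => ENNReal.ofReal_mul (by linarith)
    simp_rw [hof]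
    rw [lintegral_const_mul' _ _ ENNReal.ofReal_ne_top, lc_core (by linarith) (by linarith : (0:ℝ) ≤ 2*g)]
    rw [← ENNReal.ofReal_mul (by linarith), ← ENNReal.ofReal_mul]
    · congr 1
      rw [show p - 2 + 1 = p - 1 by ring]
      have e1 : (2*g) ^ (p-1) = 2^(p-1) * g^(p-1) := Real.mul_rpow (by norm_num) hg
      have e2 : g^(p-1) * g = g ^ p := by
        rw [← Real.rpow_add_one (ne_of_gt hg0) (p-1)]; norm_num
      have e3 : (2:ℝ)^(p-1) * 2 = 2 ^ p := by
        rw [← Real.rpow_add_one (by norm_num : (2:ℝ) ≠ 0) (p-1)]; norm_num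
      calc 2*p*((2*g)^(p-1)/(p-1)) * g = ((2:ℝ)^(p-1)*2) * p * (g^(p-1)*g) / (p-1) := by
            rw [e1]; ring
        _ = 2^p * p / (p-1) * g^p := by rw [e3, e2]; ring
    · have h2 : (0:ℝ) ≤ (2*g)^(p-2+1) / (p-2+1) :=
        div_nonneg (Real.rpow_nonneg (by linarith) _) (by linarith)
      nlinarith
lemma meas_rpow (r : ℝ) : Measurable fun x : ℝ => x ^ r := by measurability

end Aux3



set_option maxHeartbeats 1000000 in
/-- If `σ` is a Carleson measure with constant `C` and `p ∈ (1,∞)`, then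
there is a constant `C'` depending only on `C` and `p` such that
`Σ_{x ∈ T} |𝒫f(x)|^p σ(x) ≤ C' ‖f‖_{L^p(ν)}^p` for every `f ∈ L^p(∂T,ν)`. -/
theorem stmt11 (C : ℝ≥0) (p : ℝ) (hp : 1 < p) :
    ∃ C' : ℝ, 0 < C' ∧
      ∀ (T : Type u) (par : T → T) (lev : T → ℤ),
        Nonempty T →
        (∀ x : T, lev (par x) = lev x + 1) →
        (∀ x : T, {y : T | par y = x}.Finite) →
        (∀ x : T, ∃ y : T, par y = x) →
        (∀ x y : T, ∃ n m : ℕ, par^[n] x = par^[m] y) →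
        ∀ ν : Measure (PBoundary par lev),
          (∀ x : T, 0 < ν (sector par lev x) ∧ ν (sector par lev x) < ⊤) →
          ∀ σ : T → ℝ≥0,
            (∀ x : T, ∑' y : tsector par x, (σ y.1 : ℝ≥0∞)
              ≤ (C : ℝ≥0∞) * ν (sector par lev x)) →
            ∀ f : PBoundary par lev → ℝ, MemLp f (ENNReal.ofReal p) ν →
              ∑' x : T, ENNReal.ofReal (|poisson par lev ν f x| ^ p) * (σ x : ℝ≥0∞)
                ≤ ENNReal.ofReal C' * ∫⁻ ω, ENNReal.ofReal (|f ω| ^ p) ∂ν := by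
  classical
  have hp0 : (0:ℝ) < p := by linarith
  have hKpos : (0:ℝ) < 2^p * p / (p-1) := by
    have : (0:ℝ) < (2:ℝ)^p := Real.rpow_pos_of_pos (by norm_num) p
    have h1 : (0:ℝ) < p - 1 := by linarith
    positivity
  refine ⟨2^p * p / (p-1) * C + 1, by positivity, ?_⟩
  intro T par lev hne hlev hfin hsucc hcof ν hν σ hcar f hf
  obtain ⟨x₀⟩ := hne
  -- countability of T
  have hco : Countable T := by
    rw [← Set.countable_univ_iff]
    have hsub : (Set.univ : Set T) ⊆ ⋃ (m : ℕ) (n : ℕ), {y : T | par^[n] y = par^[m] x₀} := by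
      intro y _
      obtain ⟨n, m, h⟩ := hcof y x₀
      exact Set.mem_iUnion.2 ⟨m, Set.mem_iUnion.2 ⟨n, h⟩⟩
    exact Set.Countable.mono hsub (Set.countable_iUnion fun m =>
      Set.countable_iUnion fun n => (fiber_iter_finite hfin n (par^[m] x₀)).countable)
  -- ν is sigma-finite
  have hcover : ∀ ω : PBoundary par lev, ∃ m : ℕ, ω ∈ sector par lev (par^[m] x₀) := by
    intro ω
    obtain ⟨n, m, hnm⟩ := hcof (ω.1 (lev x₀)) x₀
    refine ⟨m, ?_⟩
    have h1 : lev (ω.1 (lev x₀)) = lev x₀ := ω.2.1 _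
    have h2 : lev (par^[m] x₀) = lev x₀ + m := lev_iter hlev x₀ m
    have h3 : lev (par^[n] (ω.1 (lev x₀))) = lev x₀ + n := by
      rw [lev_iter hlev, h1]
    have hlevs := congrArg lev hnm
    rw [h3, h2] at hlevs
    have hnm' : (n:ℤ) = (m:ℤ) := by omega
    show ω.1 (lev (par^[m] x₀)) = par^[m] x₀
    rw [h2, ← hnm', ← pb_iter ω (lev x₀) n]
    exact hnm
  have hsf : SigmaFinite ν := by
    refine ⟨⟨⟨fun m => sector par lev (par^[m] x₀), fun _ => trivial, fun m => (hν _).2, ?_⟩⟩⟩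
    exact Set.eq_univ_of_forall fun ω => Set.mem_iUnion.2 (hcover ω)
  -- measurable representative
  obtain ⟨f', hf'm, hff'⟩ := hf.1
  set G : PBoundary par lev → ℝ≥0∞ := fun ω => ENNReal.ofReal |f' ω| with hG
  have hGm : Measurable G := ENNReal.measurable_ofReal.comp hf'm.measurable.abs
  set Gl : ℝ → PBoundary par lev → ℝ≥0∞ :=
    fun l ω => if ENNReal.ofReal (l/2) < G ω then G ω else 0 with hGl
  set F : ℝ → PBoundary par lev → ℝ≥0∞ :=
    fun l ω => ENNReal.ofReal (2*p*l^(p-2)) * Gl l ω with hF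
  set φ : T → ℝ := fun x => |poisson par lev ν f' x| with hφ
  have hpois : ∀ x, poisson par lev ν f x = poisson par lev ν f' x := by
    intro x
    unfold poisson
    congr 1
    exact integral_congr_ae (ae_restrict_of_ae hff')
  have hRHS : (∫⁻ ω, ENNReal.ofReal (|f ω| ^ p) ∂ν) = ∫⁻ ω, ENNReal.ofReal (|f' ω| ^ p) ∂ν :=
    lintegral_congr_ae (hff'.mono fun ω h => by dsimp only; rw [h])
  rw [hRHS]
  -- integrability on sectors
  have hint : ∀ x : T, Integrable f' (ν.restrict (sector par lev x)) := by
    intro x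
    haveI : IsFiniteMeasure (ν.restrict (sector par lev x)) :=
      ⟨by rw [Measure.restrict_apply_univ]; exact (hν x).2⟩
    have h1 : MemLp f' (ENNReal.ofReal p) (ν.restrict (sector par lev x)) :=
      (hf.restrict _).ae_eq (ae_restrict_of_ae hff')
    exact memLp_one_iff_integrable.1
      (h1.mono_exponent (ENNReal.one_le_ofReal.2 hp.le))
  have hfinsec : ∀ x : T, (∫⁻ ω in sector par lev x, G ω ∂ν) ≠ ⊤ := by
    intro x
    exact ((hint x).abs.lintegral_lt_top).ne
  -- key per-point bound
  have key : ∀ l : ℝ, 0 < l → ∀ x : T, l < φ x →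
      ν (sector par lev x) ≤ (ENNReal.ofReal (l/2))⁻¹ *
        ∫⁻ ω in sector par lev x, Gl l ω ∂ν := by
    intro l hl x hlt
    have hS0 : ν (sector par lev x) ≠ 0 := (hν x).1.ne'
    have hST : ν (sector par lev x) ≠ ⊤ := (hν x).2.ne
    have hm : 0 < mnu par lev ν x := ENNReal.toReal_pos hS0 hST
    have habs : φ x ≤ (mnu par lev ν x)⁻¹ * ∫ ω in sector par lev x, |f' ω| ∂ν := by
      rw [hφ]
      show |poisson par lev ν f' x| ≤ _
      rw [poisson, abs_mul, abs_of_nonneg (inv_nonneg.2 hm.le)]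
      refine mul_le_mul_of_nonneg_left ?_ (inv_nonneg.2 hm.le)
      simpa [Real.norm_eq_abs] using
        norm_integral_le_integral_norm (μ := ν.restrict (sector par lev x)) f'
    have heq : ∫ ω in sector par lev x, |f' ω| ∂ν
        = (∫⁻ ω in sector par lev x, G ω ∂ν).toReal := by
      rw [integral_eq_lintegral_of_nonneg_ae (ae_of_all _ fun ω => abs_nonneg (f' ω))
        hf'm.measurable.abs.aestronglyMeasurable]
    have h2 : l * mnu par lev ν x < (∫⁻ ω in sector par lev x, G ω ∂ν).toReal := by
      have hlt2 := lt_of_lt_of_le hlt habs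
      rw [heq] at hlt2
      calc l * mnu par lev ν x
          < ((mnu par lev ν x)⁻¹ * (∫⁻ ω in sector par lev x, G ω ∂ν).toReal)
              * mnu par lev ν x := mul_lt_mul_of_pos_right hlt2 hm
        _ = (∫⁻ ω in sector par lev x, G ω ∂ν).toReal := by field_simp
    have h3 : ENNReal.ofReal l * ν (sector par lev x) ≤ ∫⁻ ω in sector par lev x, G ω ∂ν := by
      have h4 : ENNReal.ofReal (l * mnu par lev ν x)
          ≤ ENNReal.ofReal ((∫⁻ ω in sector par lev x, G ω ∂ν).toReal) :=
        ENNReal.ofReal_le_ofReal h2.le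
      rwa [ENNReal.ofReal_mul hl.le, ENNReal.ofReal_toReal (hfinsec x),
        mnu, ENNReal.ofReal_toReal hST] at h4
    have h4 : (∫⁻ ω in sector par lev x, G ω ∂ν)
        ≤ (∫⁻ ω in sector par lev x, Gl l ω ∂ν)
          + ENNReal.ofReal (l/2) * ν (sector par lev x) := by
      have hpt : ∀ ω, G ω ≤ Gl l ω + ENNReal.ofReal (l/2) := by
        intro ω
        simp only [hGl]
        by_cases hc : ENNReal.ofReal (l/2) < G ω
        · rw [if_pos hc]; exact le_self_add
        · rw [if_neg hc]; push_neg at hc; simpa using hc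
      calc (∫⁻ ω in sector par lev x, G ω ∂ν)
          ≤ ∫⁻ ω in sector par lev x, (Gl l ω + ENNReal.ofReal (l/2)) ∂ν :=
            lintegral_mono hpt
        _ = _ := by
            rw [lintegral_add_right _ measurable_const, setLIntegral_const]
    have h5 : ENNReal.ofReal (l/2) * ν (sector par lev x)
        ≤ ∫⁻ ω in sector par lev x, Gl l ω ∂ν := by
      have hll : ENNReal.ofReal l = ENNReal.ofReal (l/2) + ENNReal.ofReal (l/2) := by
        rw [← ENNReal.ofReal_add (by linarith) (by linarith)]
        norm_num
      have h6 := le_trans h3 h4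
      rw [hll, add_mul] at h6
      exact (ENNReal.add_le_add_iff_right
        (ENNReal.mul_ne_top ENNReal.ofReal_ne_top hST)).1 h6
    have hc0 : (ENNReal.ofReal (l/2)) ≠ 0 := (ENNReal.ofReal_pos.2 (by linarith)).ne'
    calc ν (sector par lev x)
        = (ENNReal.ofReal (l/2))⁻¹ * (ENNReal.ofReal (l/2) * ν (sector par lev x)) := by
          rw [← mul_assoc, ENNReal.inv_mul_cancel hc0 ENNReal.ofReal_ne_top, one_mul]
      _ ≤ _ := mul_le_mul_right h5 _
  -- measurability of Gl
  have hGlm : ∀ l : ℝ, Measurable (Gl l) := by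
    intro l
    rw [hGl]
    exact Measurable.ite (measurableSet_lt measurable_const hGm) hGm measurable_const
  -- distribution bound
  have step1 : ∀ l : ℝ, 0 < l →
      (∑' x : T, if l < φ x then (σ x : ℝ≥0∞) else 0)
        ≤ (C:ℝ≥0∞) * ((ENNReal.ofReal (l/2))⁻¹ * ∫⁻ ω, Gl l ω ∂ν) := by
    intro l hl
    set ρ : Measure (PBoundary par lev) :=
      (ENNReal.ofReal (l/2))⁻¹ • ν.withDensity (Gl l) with hρ
    have hρs : ∀ s : Set (PBoundary par lev), MeasurableSet s →
        ρ s = (ENNReal.ofReal (l/2))⁻¹ * ∫⁻ ω in s, Gl l ω ∂ν := by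
      intro s hs
      rw [hρ, Measure.smul_apply, withDensity_apply _ hs, smul_eq_mul]
    rw [ENNReal.tsum_eq_iSup_sum]
    refine iSup_le fun s => ?_
    rw [show (∑ x ∈ s, if l < φ x then (σ x:ℝ≥0∞) else 0)
        = ∑ x ∈ s.filter (fun x => l < φ x), (σ x : ℝ≥0∞) from (Finset.sum_filter _ _).symm]
    calc ∑ x ∈ s.filter (fun x => l < φ x), (σ x:ℝ≥0∞)
        ≤ (C:ℝ≥0∞) * ν (⋃ x ∈ s.filter (fun x => l < φ x), sector par lev x) :=
          finite_carleson hlev ν σ C hcar _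
      _ ≤ (C:ℝ≥0∞) * ρ (⋃ x ∈ s.filter (fun x => l < φ x), sector par lev x) := by
          refine mul_le_mul_right (finite_nu_le hlev ν ρ _ fun x hx => ?_) _
          rw [hρs _ (measurableSet_sector par lev x)]
          exact key l hl x (Finset.mem_filter.1 hx).2
      _ ≤ (C:ℝ≥0∞) * ρ Set.univ := mul_le_mul_right (measure_mono (Set.subset_univ _)) _
      _ = _ := by rw [hρs _ MeasurableSet.univ, setLIntegral_univ]
  -- measurability for the product swap
  have hrpm : Measurable fun l : ℝ => ENNReal.ofReal (2*p*l^(p-2)) :=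
    ENNReal.measurable_ofReal.comp ((meas_rpow (p-2)).const_mul (2*p))
  have hFm : AEMeasurable (Function.uncurry F)
      ((volume.restrict (Set.Ioi (0:ℝ))).prod ν) := by
    refine Measurable.aemeasurable ?_
    have hset : MeasurableSet {q : ℝ × PBoundary par lev | ENNReal.ofReal (q.1/2) < G q.2} :=
      measurableSet_lt (ENNReal.measurable_ofReal.comp (measurable_fst.div_const 2))
        (hGm.comp measurable_snd)
    exact Measurable.mul (hrpm.comp measurable_fst)
      (Measurable.ite hset (hGm.comp measurable_snd) measurable_const)
  -- the main chain
  have hxmeas : ∀ x : T, AEMeasurable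
      (fun l : ℝ => (σ x : ℝ≥0∞) *
        ((Set.Iio (φ x)).indicator (fun l => ENNReal.ofReal (p * l ^ (p-1))) l))
      (volume.restrict (Set.Ioi (0:ℝ))) := by
    intro x
    have h1 : Measurable fun l : ℝ => ENNReal.ofReal (p * l ^ (p-1)) :=
      ENNReal.measurable_ofReal.comp ((meas_rpow (p-1)).const_mul p)
    exact ((h1.indicator measurableSet_Iio).const_mul _).aemeasurable
  calc ∑' x : T, ENNReal.ofReal (|poisson par lev ν f x| ^ p) * (σ x : ℝ≥0∞)
      = ∑' x : T, ∫⁻ l in Set.Ioi (0:ℝ), (σ x : ℝ≥0∞) *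
          ((Set.Iio (φ x)).indicator (fun l => ENNReal.ofReal (p * l ^ (p-1))) l) := by
        refine tsum_congr fun x => ?_
        rw [lintegral_const_mul' _ _ ENNReal.coe_ne_top, lc1 hp (abs_nonneg _), hpois x, mul_comm]
    _ = ∫⁻ l in Set.Ioi (0:ℝ), ∑' x : T, (σ x:ℝ≥0∞) *
          ((Set.Iio (φ x)).indicator (fun l => ENNReal.ofReal (p*l^(p-1))) l) :=
        (lintegral_tsum hxmeas).symm
    _ ≤ ∫⁻ l in Set.Ioi (0:ℝ), (C:ℝ≥0∞) * ∫⁻ ω, F l ω ∂ν := by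
        refine lintegral_mono_ae ?_
        filter_upwards [ae_restrict_mem measurableSet_Ioi] with l hl
        have hl0 : (0:ℝ) < l := hl
        calc ∑' x : T, (σ x:ℝ≥0∞) *
              ((Set.Iio (φ x)).indicator (fun l => ENNReal.ofReal (p*l^(p-1))) l)
            = ∑' x : T, ENNReal.ofReal (p*l^(p-1)) * (if l < φ x then (σ x:ℝ≥0∞) else 0) := by
              refine tsum_congr fun x => ?_
              rw [Set.indicator_apply]
              simp only [Set.mem_Iio]
              by_cases hc : l < φ x
              · rw [if_pos hc, if_pos hc, mul_comm]
              · rw [if_neg hc, if_neg hc, mul_zero, mul_zero]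
          _ = ENNReal.ofReal (p*l^(p-1)) * ∑' x : T, (if l < φ x then (σ x:ℝ≥0∞) else 0) :=
              ENNReal.tsum_mul_left
          _ ≤ ENNReal.ofReal (p*l^(p-1)) *
              ((C:ℝ≥0∞) * ((ENNReal.ofReal (l/2))⁻¹ * ∫⁻ ω, Gl l ω ∂ν)) :=
              mul_le_mul_right (step1 l hl0) _
          _ = (C:ℝ≥0∞) * ∫⁻ ω, F l ω ∂ν := by
              have hsc : ENNReal.ofReal (p*l^(p-1)) * (ENNReal.ofReal (l/2))⁻¹
                  = ENNReal.ofReal (2*p*l^(p-2)) := by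
                rw [← ENNReal.ofReal_inv_of_pos (by linarith),
                  ← ENNReal.ofReal_mul (by positivity)]
                congr 1
                have hl1 : l ^ (p-2) = l ^ (p-1) / l := by
                  rw [show p-2 = (p-1) - 1 by ring, Real.rpow_sub hl0, Real.rpow_one]
                rw [hl1]
                field_simp
              rw [show (∫⁻ ω, F l ω ∂ν)
                  = ENNReal.ofReal (2*p*l^(p-2)) * ∫⁻ ω, Gl l ω ∂ν from
                lintegral_const_mul' _ _ ENNReal.ofReal_ne_top, ← hsc]
              ring
    _ = (C:ℝ≥0∞) * ∫⁻ l in Set.Ioi (0:ℝ), ∫⁻ ω, F l ω ∂ν :=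
        lintegral_const_mul' _ _ ENNReal.coe_ne_top
    _ = (C:ℝ≥0∞) * ∫⁻ ω, (∫⁻ l in Set.Ioi (0:ℝ), F l ω) ∂ν := by
        rw [lintegral_lintegral_swap hFm]
    _ = (C:ℝ≥0∞) * ∫⁻ ω, ENNReal.ofReal ((2^p * p / (p-1)) * |f' ω| ^ p) ∂ν := by
        congr 1
        refine lintegral_congr fun ω => ?_
        exact lc2 hp (abs_nonneg (f' ω))
    _ = (C:ℝ≥0∞) * (ENNReal.ofReal (2^p * p / (p-1)) * ∫⁻ ω, ENNReal.ofReal (|f' ω| ^ p) ∂ν) := by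
        congr 1
        simp_rw [ENNReal.ofReal_mul hKpos.le]
        exact lintegral_const_mul' _ _ ENNReal.ofReal_ne_top
    _ ≤ ENNReal.ofReal (2^p * p / (p-1) * ↑C + 1) * ∫⁻ ω, ENNReal.ofReal (|f' ω| ^ p) ∂ν := by
        rw [← mul_assoc]
        refine mul_le_mul_left ?_ _
        calc (C:ℝ≥0∞) * ENNReal.ofReal (2^p * p / (p-1))
            = ENNReal.ofReal (↑C) * ENNReal.ofReal (2^p * p / (p-1)) := by
              rw [ENNReal.ofReal_coe_nnreal]
          _ = ENNReal.ofReal (↑C * (2^p * p / (p-1))) := (ENNReal.ofReal_mul C.coe_nonneg).symm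
          _ ≤ ENNReal.ofReal (2^p * p / (p-1) * ↑C + 1) :=
            ENNReal.ofReal_le_ofReal (by rw [mul_comm]; linarith)
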